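/- Let h₁ ≤ h₂ ≤ … ≤ h_M be positive reals, σ² > 0, R_t ≥ 0, and let p* be the power allocation defined by p_m* = ((2^{R_t}-1)/2^{R_t})·(P_max - Σ_{j<m} p_j* + σ²/h_m) for m < M and p_M* = P_max - Σ_{m<M} p_m*. Then for every m < M, the achieved rate log₂(1 + h_m p_m*/(h_m Σ_{j>m} p_j* + σ²)) equals R_t. -/

import Mathlib

theorem stmt_13 (M : ℕ) (hM : 1 ≤ M) (h : ℕ → ℝ) (hh : ∀ m < M, 0 < h m)
    (hsorted : ∀ i j, i ≤ j → j < M → h i ≤ h j)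
    (σ2 Pmax Rt : ℝ) (hσ : 0 < σ2) (hPmax : 0 < Pmax) (hRt : 0 ≤ Rt)
    (p : ℕ → ℝ)
    (hrec : ∀ m, m + 1 < M →
      p m = ((2 : ℝ) ^ Rt - 1) / (2 : ℝ) ^ Rt *
        (Pmax - (∑ j ∈ Finset.range m, p j) + σ2 / h m))
    (hlast : p (M - 1) = Pmax - ∑ j ∈ Finset.range (M - 1), p j)
    (hnonneg : ∀ m < M, 0 ≤ p m) :
    ∀ m, m + 1 < M →
      Real.logb 2 (1 + h m * p m /
        (h m * (∑ j ∈ Finset.Ico (m + 1) M, p j) + σ2)) = Rt := by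
  intro m hm
  have hm' : m < M := by omega
  have hhm : 0 < h m := hh m hm'
  have hE : (0:ℝ) < 2 ^ Rt := Real.rpow_pos_of_pos (by norm_num) _
  have htot : ∑ j ∈ Finset.range M, p j = Pmax := by
    have hM1 : M = (M - 1) + 1 := by omega
    rw [hM1, Finset.sum_range_succ, hlast]
    ring
  have hsum1 : ∑ j ∈ Finset.range (m+1), p j + ∑ j ∈ Finset.Ico (m+1) M, p j
      = ∑ j ∈ Finset.range M, p j := by
    simp only [Finset.range_eq_Ico]
    exact Finset.sum_Ico_consecutive _ (by omega) (by omega)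
  rw [Finset.sum_range_succ] at hsum1
  have hsplit : ∑ j ∈ Finset.Ico (m+1) M, p j
      = Pmax - (∑ j ∈ Finset.range m, p j) - p m := by
    rw [htot] at hsum1; linarith
  have hsum2 : ∑ j ∈ Finset.range m, p j + ∑ j ∈ Finset.Ico m M, p j
      = ∑ j ∈ Finset.range M, p j := by
    simp only [Finset.range_eq_Ico]
    exact Finset.sum_Ico_consecutive _ (by omega) (by omega)
  have hIco_nonneg : 0 ≤ ∑ j ∈ Finset.Ico m M, p j :=
    Finset.sum_nonneg fun j hj => hnonneg j (Finset.mem_Ico.mp hj).2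
  have hA : 0 < Pmax - ∑ j ∈ Finset.range m, p j + σ2 / h m := by
    rw [htot] at hsum2
    have := div_pos hσ hhm
    linarith
  have harg : 1 + h m * p m /
      (h m * (∑ j ∈ Finset.Ico (m + 1) M, p j) + σ2) = 2 ^ Rt := by
    rw [hsplit, hrec m hm]
    set S := ∑ j ∈ Finset.range m, p j
    set A := Pmax - S + σ2 / h m with hAdef
    have hD : h m * (Pmax - S - ((2:ℝ) ^ Rt - 1) / (2:ℝ) ^ Rt * A) + σ2
        = h m * A / (2:ℝ) ^ Rt := by
      rw [hAdef]
      field_simp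
      ring
    rw [hD]
    field_simp
    ring
  rw [harg]
  rw [Real.logb_rpow (by norm_num)]
  norm_num
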